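/- arXiv:1710.03647 — 2 statements merged into one kernel-verified Lean document; each statement's English description precedes it below -/
import Mathlib

section
/- Let f* be the least energy progress measure of an energy game arena Γ. Then for every vertex v ∈ W₀ (i.e., every vertex from which player 0 has a winning memoryless strategy), f*(v) ⪯ M_Γ, where M_Γ = Σ_{v∈V} max({0} ∪ {−w(v,v') : (v,v') ∈ E}). -/
open scoped Classical
noncomputable section

/-- An energy game arena: vertices `V`, edge relation `E`, integer weights `w`,
player-0 vertices `P0` (player 1 owns the rest), every vertex has a successor. -/
structure Arena (V : Type) where
  E : V → V → Prop
  w : V → V → ℤ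
  P0 : V → Prop
  total : ∀ v, ∃ v', E v v'

variable {V : Type}

/-- `ρ` is a play (infinite path) starting at `v`. -/
def IsPlay (A : Arena V) (v : V) (ρ : ℕ → V) : Prop :=
  ρ 0 = v ∧ ∀ i, A.E (ρ i) (ρ (i + 1))

/-- A memoryless strategy for player 0. -/
def Strategy0 (A : Arena V) (σ : V → V) : Prop :=
  ∀ v, A.P0 v → A.E v (σ v)

/-- A memoryless strategy for player 1. -/
def Strategy1 (A : Arena V) (σ : V → V) : Prop :=
  ∀ v, ¬ A.P0 v → A.E v (σ v)

/-- The play `ρ` is consistent with the player-0 strategy `σ`. -/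
def Consistent0 (A : Arena V) (σ : V → V) (ρ : ℕ → V) : Prop :=
  ∀ j, A.P0 (ρ j) → ρ (j + 1) = σ (ρ j)

/-- The play `ρ` is consistent with the player-1 strategy `σ`. -/
def Consistent1 (A : Arena V) (σ : V → V) (ρ : ℕ → V) : Prop :=
  ∀ j, ¬ A.P0 (ρ j) → ρ (j + 1) = σ (ρ j)

/-- Energy level of the prefix `ρ 0 … ρ j` with initial credit `c`. -/
def energy (A : Arena V) (c : ℕ) (ρ : ℕ → V) (j : ℕ) : ℤ :=
  (c : ℤ) + ∑ i ∈ Finset.range j, A.w (ρ i) (ρ (i + 1))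

/-- The player-0 strategy `σ` is winning from `v` with initial credit `c`. -/
def WinningFrom (A : Arena V) (σ : V → V) (v : V) (c : ℕ) : Prop :=
  ∀ ρ : ℕ → V, IsPlay A v ρ → Consistent0 A σ ρ → ∀ j, 0 ≤ energy A c ρ j

/-- Winning region of player 0. -/
def W0 (A : Arena V) : Set V :=
  {v | ∃ σ : V → V, Strategy0 A σ ∧ ∃ c : ℕ, WinningFrom A σ v c}

/-- `a ⊖ b = max (0, a - b)`, with `⊤ ⊖ b = ⊤`. -/
def osub (a : ℕ∞) (b : ℤ) : ℕ∞ :=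
  a.map (fun n : ℕ => ((n : ℤ) - b).toNat)

/-- Energy progress measure. -/
def IsEPM (A : Arena V) (f : V → ℕ∞) : Prop :=
  (∀ v, A.P0 v → ∃ v', A.E v v' ∧ osub (f v') (A.w v v') ≤ f v) ∧
  (∀ v, ¬ A.P0 v → ∀ v', A.E v v' → osub (f v') (A.w v v') ≤ f v)

/-- New value at `v` computed by the lifting operator. -/
def liftVal (A : Arena V) (f : V → ℕ∞) (v : V) : ℕ∞ :=
  if A.P0 v then sInf {x : ℕ∞ | ∃ v', A.E v v' ∧ x = osub (f v') (A.w v v')}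
  else sSup {x : ℕ∞ | ∃ v', A.E v v' ∧ x = osub (f v') (A.w v v')}

/-- The lifting operator `δ(·, v)`. -/
def liftOp (A : Arena V) (f : V → ℕ∞) (v : V) : V → ℕ∞ :=
  fun u => if u = v then liftVal A f v else f u

/-- `f` violates the EPM local condition at `v`. -/
def Violates (A : Arena V) (f : V → ℕ∞) (v : V) : Prop :=
  (A.P0 v ∧ ∀ v', A.E v v' → f v < osub (f v') (A.w v v')) ∨
  (¬ A.P0 v ∧ ∃ v', A.E v v' ∧ f v < osub (f v') (A.w v v'))

/-- `M_Γ = Σ_{v∈V} max({0} ∪ {−w(v,v') : (v,v') ∈ E})`. -/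
def MGamma (A : Arena V) [Fintype V] : ℕ :=
  ∑ v : V, (Finset.univ.filter (fun v' => A.E v v')).sup (fun v' => (-(A.w v v')).toNat)

section AuxProof

variable {V : Type}

lemma osub_coe' (m : ℕ) (b : ℤ) : osub (m : ℕ∞) b = (((m : ℤ) - b).toNat : ℕ∞) := rfl

lemma eq_top_or_coe' (x : ℕ∞) : x = ⊤ ∨ ∃ c : ℕ, x = (c : ℕ∞) := by
  cases x with
  | top => exact Or.inl rfl
  | coe m => exact Or.inr ⟨m, rfl⟩

lemma osub_top' (b : ℤ) : osub ⊤ b = ⊤ := rfl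

lemma erase_comm' {α : Type*} [DecidableEq α] (s : Finset α) (a b : α) :
    (s.erase a).erase b = (s.erase b).erase a := by
  ext x; simp only [Finset.mem_erase]; tauto

lemma osub_mono' {a a' : ℕ∞} (b : ℤ) (h : a ≤ a') : osub a b ≤ osub a' b := by
  cases a' with
  | top => exact le_top
  | coe m' =>
    cases a with
    | top => exact absurd h (by simp)
    | coe m =>
      rw [osub_coe', osub_coe']
      have hm : m ≤ m' := by exact_mod_cast h
      have : ((m : ℤ) - b).toNat ≤ ((m' : ℤ) - b).toNat := by omega
      exact_mod_cast this

lemma osub_eq_coe' {x : ℕ∞} {b : ℤ} {c : ℕ} (h : osub x b = (c : ℕ∞)) (hc : c ≠ 0) :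
    ∃ m : ℕ, x = (m : ℕ∞) ∧ (m : ℤ) - b = (c : ℤ) := by
  cases x with
  | top => rw [osub_top'] at h; exact absurd h (by simp)
  | coe m =>
    rw [osub_coe'] at h
    have hm : ((m : ℤ) - b).toNat = c := by exact_mod_cast h
    exact ⟨m, rfl, by omega⟩

lemma lt_coe_le_pred' {x : ℕ∞} {c : ℕ} (h : x < (c : ℕ∞)) : x ≤ ((c - 1 : ℕ) : ℕ∞) := by
  cases x with
  | top => exact absurd h (by simp)
  | coe m =>
    have : m < c := by exact_mod_cast h
    exact_mod_cast Nat.le_sub_one_of_lt this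

/-- max over successors of the negative part of the weight. -/
def mneg (A : Arena V) [Fintype V] (v : V) : ℕ :=
  (Finset.univ.filter (fun v' => A.E v v')).sup (fun v' => (-(A.w v v')).toNat)

lemma mneg_le' {A : Arena V} [Fintype V] {v v' : V} (h : A.E v v') :
    (-(A.w v v')).toNat ≤ mneg A v :=
  Finset.le_sup (f := fun v' => (-(A.w v v')).toNat) (by simp [h])

lemma MGamma_eq_sum (A : Arena V) [Fintype V] : MGamma A = ∑ v : V, mneg A v := rfl

/-- Tightness: at a positive finite value of the least EPM, some edge is tight. -/
lemma tight_edge (A : Arena V) (f : V → ℕ∞) (hEPM : IsEPM A f)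
    (hleast : ∀ g : V → ℕ∞, IsEPM A g → ∀ v, f v ≤ g v)
    {v : V} {c : ℕ} (hv : f v = (c : ℕ∞)) (hc : c ≠ 0) :
    ∃ v', A.E v v' ∧ osub (f v') (A.w v v') = f v := by
  by_contra hno
  push_neg at hno
  set g : V → ℕ∞ := Function.update f v ((c - 1 : ℕ) : ℕ∞) with hg
  have hgle : ∀ u, g u ≤ f u := by
    intro u
    by_cases hu : u = v
    · subst hu
      simp only [hg, Function.update_self, hv]
      exact_mod_cast Nat.sub_le c 1
    · simp [hg, Function.update_of_ne hu]
  have hkey : ∀ v', A.E v v' → osub (f v') (A.w v v') ≤ f v →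
      osub (g v') (A.w v v') ≤ g v := by
    intro v' hE hle
    have h1 : osub (f v') (A.w v v') < (c : ℕ∞) :=
      lt_of_le_of_ne (hv ▸ hle) (fun h => hno v' hE (h.trans hv.symm))
    have h2 : osub (g v') (A.w v v') ≤ ((c - 1 : ℕ) : ℕ∞) :=
      le_trans (osub_mono' _ (hgle v')) (lt_coe_le_pred' h1)
    simpa [hg, Function.update_self] using h2
  have hgEPM : IsEPM A g := by
    constructor
    · intro u hu
      by_cases huv : u = v
      · subst huv
        obtain ⟨v', hE, hle⟩ := hEPM.1 u hu
        exact ⟨v', hE, hkey v' hE hle⟩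
      · obtain ⟨v', hE, hle⟩ := hEPM.1 u hu
        refine ⟨v', hE, ?_⟩
        have := (osub_mono' (A.w u v') (hgle v')).trans hle
        simpa [hg, Function.update_of_ne huv] using this
    · intro u hu v' hE
      by_cases huv : u = v
      · subst huv
        exact hkey v' hE (hEPM.2 u hu v' hE)
      · have := (osub_mono' (A.w u v') (hgle v')).trans (hEPM.2 u hu v' hE)
        simpa [hg, Function.update_of_ne huv] using this
  have := hleast g hgEPM v
  rw [hv] at this
  simp only [hg, Function.update_self] at this
  have : c ≤ c - 1 := by exact_mod_cast this
  omega

/-- Tight paths to a zero-value vertex using a decreasing set of available vertices. -/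
inductive GI (A : Arena V) (f : V → ℕ∞) : Finset V → V → Prop
  | zero (S : Finset V) (v : V) : f v = 0 → GI A f S v
  | step (S : Finset V) (v v' : V) : v ∈ S → A.E v v' →
      osub (f v') (A.w v v') = f v → GI A f (S.erase v) v' → GI A f S v

lemma GI_mono {A : Arena V} {f : V → ℕ∞} {S S' : Finset V} {v : V}
    (h : GI A f S v) (hss : S ⊆ S') : GI A f S' v := by
  induction h generalizing S' with
  | zero S v h0 => exact GI.zero _ _ h0
  | step S v v' hv hE ht _ ih =>
    exact GI.step _ _ _ (hss hv) hE ht (ih (Finset.erase_subset_erase _ hss))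

lemma GI_cut {A : Arena V} {f : V → ℕ∞} {S : Finset V} {v : V} (h : GI A f S v) :
    ∀ u, GI A f (S.erase u) v ∨ GI A f S u := by
  induction h with
  | zero S v h0 => exact fun u => Or.inl (GI.zero _ _ h0)
  | step S v v' hv hE ht h ih =>
    intro u
    by_cases huv : u = v
    · subst huv; exact Or.inr (GI.step _ _ _ hv hE ht h)
    · rcases ih u with h1 | h1
      · left
        refine GI.step _ _ _ (Finset.mem_erase.mpr ⟨fun hh => huv hh.symm, hv⟩) hE ht ?_
        rwa [erase_comm'] at h1
      · exact Or.inr (GI_mono h1 (Finset.erase_subset _ _))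

lemma GI_closure [Fintype V] {A : Arena V} {f : V → ℕ∞} {u v' : V}
    (hE : A.E u v') (ht : osub (f v') (A.w u v') = f u)
    (h : GI A f Finset.univ v') : GI A f Finset.univ u := by
  rcases GI_cut h u with h1 | h1
  · exact GI.step _ _ _ (Finset.mem_univ u) hE ht h1
  · exact h1

lemma GI_bound [Fintype V] {A : Arena V} {f : V → ℕ∞} {S : Finset V} {v : V}
    (h : GI A f S v) : f v ≤ ((∑ u ∈ S, mneg A u : ℕ) : ℕ∞) := by
  induction h with
  | zero S v h0 => simp [h0]
  | step S v v' hv hE ht h ih =>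
    rcases eq_top_or_coe' (f v) with hfv | ⟨c, hfv⟩
    · exfalso
      rw [hfv] at ht
      rcases eq_top_or_coe' (f v') with hfv' | ⟨m, hfv'⟩
      · rw [hfv'] at ih
        exact ENat.coe_ne_top _ (top_le_iff.mp ih)
      · rw [hfv', osub_coe'] at ht
        exact absurd ht (by simp)
    · rw [hfv]
      by_cases hc : c = 0
      · simp [hc]
      · rw [hfv] at ht
        obtain ⟨m, hm, hmw⟩ := osub_eq_coe' ht hc
        rw [hm] at ih
        have h1 : m ≤ ∑ u ∈ S.erase v, mneg A u := by exact_mod_cast ih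
        have h2 : (-(A.w v v')).toNat ≤ mneg A v := mneg_le' hE
        have h3 : ∑ u ∈ S.erase v, mneg A u + mneg A v = ∑ u ∈ S, mneg A u :=
          Finset.sum_erase_add S _ hv
        have : c ≤ ∑ u ∈ S, mneg A u := by omega
        exact_mod_cast this

/-- Every finite value of the least EPM admits a tight simple path to a zero vertex. -/
lemma reach_zero [Fintype V] (A : Arena V) (f : V → ℕ∞) (hEPM : IsEPM A f)
    (hleast : ∀ g : V → ℕ∞, IsEPM A g → ∀ v, f v ≤ g v) :
    ∀ v, f v ≠ ⊤ → GI A f Finset.univ v := by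
  by_contra hcon
  push_neg at hcon
  obtain ⟨v0, hv0top, hv0⟩ := hcon
  set D : V → Prop := fun v => f v ≠ ⊤ ∧ f v ≠ 0 ∧ ¬ GI A f Finset.univ v with hD
  set g : V → ℕ∞ := fun v => if D v then f v - 1 else f v with hg
  have hgle : ∀ u, g u ≤ f u := by
    intro u; simp only [hg]; split
    · exact tsub_le_self
    · exact le_rfl
  -- at a D-vertex with value c, g = c - 1
  have hgD : ∀ u (c : ℕ), D u → f u = (c : ℕ∞) → g u = ((c - 1 : ℕ) : ℕ∞) := by
    intro u c hDu hfu
    simp only [hg, if_pos hDu, hfu]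
    rw [← Nat.cast_one, ← ENat.coe_sub]
  -- tight edges from D vertices go to D vertices and the inequality for g holds
  have hkey : ∀ u (c : ℕ) v', D u → f u = (c : ℕ∞) → A.E u v' →
      osub (f v') (A.w u v') = f u → osub (g v') (A.w u v') ≤ g u := by
    intro u c v' hDu hfu hE ht
    have hc : c ≠ 0 := by
      intro h; apply hDu.2.1; rw [hfu, h]; rfl
    have hnGI : ¬ GI A f Finset.univ v' := fun h => hDu.2.2 (GI_closure hE ht h)
    rw [hfu] at ht
    obtain ⟨m, hm, hmw⟩ := osub_eq_coe' ht hc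
    have hm0 : m ≠ 0 := by
      intro h0
      apply hnGI
      exact GI.zero _ _ (by rw [hm, h0]; rfl)
    have hDv' : D v' := by
      refine ⟨by rw [hm]; exact (by simp), ?_, hnGI⟩
      rw [hm]; exact_mod_cast hm0
    rw [hgD v' m hDv' hm, hgD u c hDu hfu, osub_coe']
    have : (((m - 1 : ℕ) : ℤ) - A.w u v').toNat = c - 1 := by omega
    rw [this]
  have hgEPM : IsEPM A g := by
    constructor
    · intro u hu
      by_cases hDu : D u
      · rcases eq_top_or_coe' (f u) with htop | ⟨c, hfu⟩
        · exact absurd htop hDu.1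
        · have hc : c ≠ 0 := by
            intro h; apply hDu.2.1; rw [hfu, h]; rfl
          obtain ⟨v', hE, ht⟩ := tight_edge A f hEPM hleast hfu hc
          exact ⟨v', hE, hkey u c v' hDu hfu hE ht⟩
      · obtain ⟨v', hE, hle⟩ := hEPM.1 u hu
        refine ⟨v', hE, ?_⟩
        have := (osub_mono' (A.w u v') (hgle v')).trans hle
        simpa [hg, if_neg hDu] using this
    · intro u hu v' hE
      have hle := hEPM.2 u hu v' hE
      by_cases hDu : D u
      · rcases eq_top_or_coe' (f u) with htop | ⟨c, hfu⟩
        · exact absurd htop hDu.1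
        · by_cases heq : osub (f v') (A.w u v') = f u
          · exact hkey u c v' hDu hfu hE heq
          · have h1 : osub (f v') (A.w u v') < (c : ℕ∞) :=
              lt_of_le_of_ne (hfu ▸ hle) (fun h => heq (h.trans hfu.symm))
            have h2 : osub (g v') (A.w u v') ≤ ((c - 1 : ℕ) : ℕ∞) :=
              le_trans (osub_mono' _ (hgle v')) (lt_coe_le_pred' h1)
            rw [hgD u c hDu hfu]
            exact h2
      · have := (osub_mono' (A.w u v') (hgle v')).trans hle
        simpa [hg, if_neg hDu] using this
  have hDv0 : D v0 := by
    refine ⟨hv0top, ?_, hv0⟩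
    intro h0
    exact hv0 (GI.zero _ _ h0)
  rcases eq_top_or_coe' (f v0) with htop | ⟨c, hfv0⟩
  · exact hv0top htop
  have hc : c ≠ 0 := by
    intro h; apply hDv0.2.1; rw [hfv0, h]; rfl
  have := hleast g hgEPM v0
  rw [hfv0, hgD v0 c hDv0 hfv0] at this
  have : c ≤ c - 1 := by exact_mod_cast this
  omega

/-- A default successor function giving consistent plays. -/
def dsucc (A : Arena V) (σ : V → V) : V → V :=
  fun v => if A.P0 v then σ v else Classical.choose (A.total v)

lemma exists_play (A : Arena V) (σ : V → V) (hσ : Strategy0 A σ) (u : V) :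
    ∃ ρ, IsPlay A u ρ ∧ Consistent0 A σ ρ := by
  refine ⟨fun n => (dsucc A σ)^[n] u, ⟨rfl, fun i => ?_⟩, fun j hj => ?_⟩
  · show A.E ((dsucc A σ)^[i] u) ((dsucc A σ)^[i + 1] u)
    rw [Function.iterate_succ_apply']
    unfold dsucc; split
    · exact hσ _ ‹_›
    · exact Classical.choose_spec (A.total _)
  · have hj' : A.P0 ((dsucc A σ)^[j] u) := hj
    show (dsucc A σ)^[j + 1] u = σ ((dsucc A σ)^[j] u)
    rw [Function.iterate_succ_apply']
    show (if A.P0 ((dsucc A σ)^[j] u) then σ ((dsucc A σ)^[j] u)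
      else Classical.choose (A.total ((dsucc A σ)^[j] u))) = _
    rw [if_pos hj']

lemma extend_win {A : Arena V} {σ : V → V} (hσ : Strategy0 A σ) {u u' : V} {c : ℕ}
    (hw : WinningFrom A σ u c) (hE : A.E u u') (hcons : A.P0 u → u' = σ u) :
    0 ≤ (c : ℤ) + A.w u u' ∧ WinningFrom A σ u' ((c : ℤ) + A.w u u').toNat := by
  have key : ∀ ρ' : ℕ → V, IsPlay A u' ρ' → Consistent0 A σ ρ' →
      (0 ≤ (c : ℤ) + A.w u u' ∧ ∀ j, 0 ≤ energy A ((c : ℤ) + A.w u u').toNat ρ' j) := by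
    intro ρ' hplay hcons'
    set ρ : ℕ → V := fun n => Nat.rec u (fun m _ => ρ' m) n with hρ
    have hρ0 : ρ 0 = u := rfl
    have hρs : ∀ n, ρ (n + 1) = ρ' n := fun n => rfl
    have hplay2 : IsPlay A u ρ := by
      refine ⟨rfl, fun i => ?_⟩
      cases i with
      | zero => rw [hρ0, hρs, hplay.1]; exact hE
      | succ n => rw [hρs, hρs]; exact hplay.2 n
    have hcons2 : Consistent0 A σ ρ := by
      intro j hj
      cases j with
      | zero =>
        rw [hρ0] at hj
        rw [hρs, hρ0, hplay.1]
        exact hcons hj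
      | succ n =>
        rw [hρs] at hj
        rw [hρs, hρs]
        exact hcons' n hj
    have hwin := hw ρ hplay2 hcons2
    have h1 : 0 ≤ (c : ℤ) + A.w u u' := by
      have := hwin 1
      rw [energy, Finset.sum_range_one, hρ0, hρs, hplay.1] at this
      exact this
    refine ⟨h1, fun j => ?_⟩
    have h2 := hwin (j + 1)
    rw [energy, Finset.sum_range_succ'] at h2
    rw [energy, Int.toNat_of_nonneg h1]
    have harg : ∀ i, A.w (ρ (i + 1)) (ρ (i + 1 + 1)) = A.w (ρ' i) (ρ' (i + 1)) := by
      intro i; rw [hρs, hρs]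
    rw [Finset.sum_congr rfl (fun i _ => harg i), hρ0, hρs, hplay.1] at h2
    linarith
  constructor
  · obtain ⟨ρ', h1, h2⟩ := exists_play A σ hσ u'
    exact (key ρ' h1 h2).1
  · intro ρ' h1 h2 j
    exact (key ρ' h1 h2).2 j

/-- The minimal-credit function of a player-0 strategy is an EPM. -/
lemma fsigma_epm (A : Arena V) (σ : V → V) (hσ : Strategy0 A σ) :
    IsEPM A (fun u => if h : ∃ c : ℕ, WinningFrom A σ u c then ((Nat.find h : ℕ) : ℕ∞) else ⊤) := by
  have main : ∀ u u', A.E u u' → (A.P0 u → u' = σ u) →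
      osub (if h : ∃ c : ℕ, WinningFrom A σ u' c then ((Nat.find h : ℕ) : ℕ∞) else ⊤) (A.w u u')
      ≤ (if h : ∃ c : ℕ, WinningFrom A σ u c then ((Nat.find h : ℕ) : ℕ∞) else ⊤) := by
    intro u u' hE hcons
    by_cases h : ∃ c : ℕ, WinningFrom A σ u c
    · rw [dif_pos h]
      obtain ⟨h1, h2⟩ := extend_win hσ (Nat.find_spec h) hE hcons
      have hex : ∃ c : ℕ, WinningFrom A σ u' c := ⟨_, h2⟩
      rw [dif_pos hex]
      have hle : ((Nat.find hex : ℕ) : ℕ∞) ≤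
          ((((Nat.find h : ℤ) + A.w u u').toNat : ℕ) : ℕ∞) := by
        exact_mod_cast Nat.find_le h2
      refine le_trans (osub_mono' _ hle) ?_
      rw [osub_coe']
      have : ((((Nat.find h : ℤ) + A.w u u').toNat : ℤ) - A.w u u').toNat = Nat.find h := by
        omega
      rw [this]
    · rw [dif_neg h]; exact le_top
  constructor
  · intro u hu
    exact ⟨σ u, hσ u hu, main u (σ u) (hσ u hu) (fun _ => rfl)⟩
  · intro u hu u' hE
    exact main u u' hE (fun h => absurd h hu)

end AuxProof

/-- The least energy progress measure is at most `M_Γ` on every vertex of player 0's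
winning region `W₀`. -/
theorem stmt7 {V : Type} [Fintype V] [Nonempty V] (A : Arena V)
    (fstar : V → ℕ∞) (hEPM : IsEPM A fstar)
    (hleast : ∀ f : V → ℕ∞, IsEPM A f → ∀ v, fstar v ≤ f v) :
    ∀ v : V, v ∈ W0 A → fstar v ≤ (MGamma A : ℕ∞) := by
  intro v hv
  obtain ⟨σ, hσ, c, hwin⟩ := hv
  have hntop : fstar v ≠ ⊤ := by
    have h1 := hleast _ (fsigma_epm A σ hσ) v
    intro htop
    rw [htop, top_le_iff] at h1
    have hex : ∃ k : ℕ, WinningFrom A σ v k := ⟨c, hwin⟩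
    rw [dif_pos hex] at h1
    exact absurd h1 (by simp)
  have hGI := reach_zero A fstar hEPM hleast v hntop
  have hb := GI_bound hGI
  rwa [MGamma_eq_sum]
end
end

section
/- Let Γ = (V,E,w,⟨V₀,V₁⟩) be an energy game arena and v ∈ V. Then v ∈ W₀ (player 0 wins the energy game from v for some initial credit) if and only if player 0 has a memoryless strategy σ₀ such that every play π = v₀v₁v₂… from v consistent with σ₀ satisfies liminf_{n→∞} (1/n)·Σ_{i=0}^{n−1} w(v_i,v_{i+1}) ≥ 0; i.e., the energy decision problem coincides with the threshold-0 mean-payoff condition. -/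
open scoped Classical
noncomputable section

variable {V : Type}

-- ==================== auxiliary material ====================

/-- Prefix sum of weights along a play. -/
def pS (A : Arena V) (ρ : ℕ → V) (n : ℕ) : ℤ :=
  ∑ i ∈ Finset.range n, A.w (ρ i) (ρ (i + 1))

/-- Bound on how negative a single weight can be. -/
def maxW (A : Arena V) [Fintype V] : ℕ :=
  Finset.univ.sup (fun p : V × V => (-(A.w p.1 p.2)).toNat)

lemma weight_lb [Fintype V] (A : Arena V) (a b : V) :
    -(maxW A : ℤ) ≤ A.w a b := by
  have h1 : (-(A.w a b)).toNat ≤ maxW A :=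
    Finset.le_sup (f := fun p : V × V => (-(A.w p.1 p.2)).toNat) (Finset.mem_univ (a, b))
  have h2 : -(A.w a b) ≤ ((-(A.w a b)).toNat : ℤ) := Int.self_le_toNat _
  have h3 : ((-(A.w a b)).toNat : ℤ) ≤ (maxW A : ℤ) := by exact_mod_cast h1
  omega

lemma pS_lb [Fintype V] (A : Arena V) (ρ : ℕ → V) (n : ℕ) :
    -((n : ℤ) * (maxW A : ℤ)) ≤ pS A ρ n := by
  have h : ∑ _i ∈ Finset.range n, (-(maxW A : ℤ)) ≤ pS A ρ n :=
    Finset.sum_le_sum (fun i _ => weight_lb A _ _)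
  simpa using h

lemma pS_add (A : Arena V) (ρ : ℕ → V) (m n : ℕ) :
    pS A ρ (m + n) = pS A ρ m + ∑ i ∈ Finset.range n, A.w (ρ (m + i)) (ρ (m + i + 1)) := by
  induction n with
  | zero => simp [pS]
  | succ k ih =>
      rw [show m + (k+1) = (m+k)+1 by omega]
      rw [pS, Finset.sum_range_succ, ← pS, ih, Finset.sum_range_succ]
      ring_nf

-- ===== splice: remove the cycle ρ a … ρ b (with ρ a = ρ b) from a play =====

/-- The play with the segment `[a, b)` removed. -/
def spl (ρ : ℕ → V) (a b : ℕ) : ℕ → V :=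
  fun n => if n < a then ρ n else ρ (n + (b - a))

lemma spl_lt {ρ : ℕ → V} {a b n : ℕ} (h : n < a) : spl ρ a b n = ρ n := if_pos h
lemma spl_ge {ρ : ℕ → V} {a b n : ℕ} (h : a ≤ n) : spl ρ a b n = ρ (n + (b - a)) :=
  if_neg (by omega)

lemma spl_succ {ρ : ℕ → V} {a b : ℕ} (hab : a ≤ b) (hcyc : ρ a = ρ b) (n : ℕ) :
    spl ρ a b (n + 1) = ρ ((if n < a then n else n + (b - a)) + 1) := by
  by_cases hn : n + 1 < a
  · rw [spl_lt hn, if_pos (by omega)]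
  · rw [spl_ge (by omega : a ≤ n + 1)]
    by_cases hn' : n < a
    · -- n + 1 = a
      have hna : n + 1 = a := by omega
      rw [if_pos hn', show n + 1 + (b - a) = b by omega, ← hcyc, hna]
    · rw [if_neg hn']
      congr 1
      omega

lemma spl_isPlay {A : Arena V} {v : V} {ρ : ℕ → V} {a b : ℕ}
    (hab : a ≤ b) (hcyc : ρ a = ρ b) (hp : IsPlay A v ρ) :
    IsPlay A v (spl ρ a b) := by
  constructor
  · by_cases h0 : 0 < a
    · rw [spl_lt h0]; exact hp.1
    · have ha : a = 0 := by omega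
      rw [spl_ge (by omega), show 0 + (b - a) = b by omega, ← hcyc, ha]
      exact hp.1
  · intro n
    rw [spl_succ hab hcyc n]
    by_cases hn : n < a
    · rw [spl_lt hn, if_pos hn]; exact hp.2 n
    · rw [spl_ge (by omega : a ≤ n), if_neg hn]; exact hp.2 (n + (b - a))

lemma spl_consistent {A : Arena V} {σ : V → V} {ρ : ℕ → V} {a b : ℕ}
    (hab : a ≤ b) (hcyc : ρ a = ρ b) (hc : Consistent0 A σ ρ) :
    Consistent0 A σ (spl ρ a b) := by
  intro n hP
  rw [spl_succ hab hcyc n]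
  by_cases hn : n < a
  · rw [spl_lt hn] at hP ⊢; rw [if_pos hn]; exact hc n hP
  · rw [spl_ge (by omega : a ≤ n)] at hP ⊢; rw [if_neg hn]; exact hc (n + (b - a)) hP

lemma spl_w {A : Arena V} {ρ : ℕ → V} {a b : ℕ}
    (hab : a ≤ b) (hcyc : ρ a = ρ b) (n : ℕ) :
    A.w (spl ρ a b n) (spl ρ a b (n + 1)) =
      A.w (ρ (if n < a then n else n + (b - a)))
          (ρ ((if n < a then n else n + (b - a)) + 1)) := by
  rw [spl_succ hab hcyc n]
  by_cases hn : n < a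
  · rw [spl_lt hn, if_pos hn]
  · rw [spl_ge (by omega : a ≤ n), if_neg hn]

lemma spl_pS {A : Arena V} {ρ : ℕ → V} {a b : ℕ}
    (hab : a ≤ b) (hcyc : ρ a = ρ b) (s : ℕ) :
    pS A (spl ρ a b) (a + s) = pS A ρ a + (pS A ρ (b + s) - pS A ρ b) := by
  have h1 : pS A (spl ρ a b) a = pS A ρ a := by
    unfold pS
    refine Finset.sum_congr rfl ?_
    intro i hi
    rw [Finset.mem_range] at hi
    rw [spl_w hab hcyc i, if_pos hi]
  rw [pS_add A (spl ρ a b) a s, h1, pS_add A ρ b s]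
  have h2 : ∀ i, A.w (spl ρ a b (a + i)) (spl ρ a b (a + i + 1)) =
      A.w (ρ (b + i)) (ρ (b + i + 1)) := by
    intro i
    rw [spl_w hab hcyc (a + i), if_neg (by omega)]
    congr 2 <;> omega
  simp only [h2]
  ring

-- ===== periodic play: repeat the cycle ρ a … ρ b forever =====

/-- The play that follows `ρ` up to `a` and then loops through `ρ a … ρ (b-1)` forever. -/
def per (ρ : ℕ → V) (a b : ℕ) : ℕ → V :=
  fun n => if n < a then ρ n else ρ (a + (n - a) % (b - a))

lemma per_lt {ρ : ℕ → V} {a b n : ℕ} (h : n < a) : per ρ a b n = ρ n := if_pos h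
lemma per_ge {ρ : ℕ → V} {a b n : ℕ} (h : a ≤ n) :
    per ρ a b n = ρ (a + (n - a) % (b - a)) := if_neg (by omega)

lemma per_succ {ρ : ℕ → V} {a b : ℕ} (hab : a < b) (hcyc : ρ a = ρ b) (n : ℕ) :
    per ρ a b (n + 1) =
      ρ ((if n < a then n else a + (n - a) % (b - a)) + 1) := by
  set p := b - a with hp
  have hp0 : 0 < p := by omega
  by_cases hn : n + 1 < a
  · rw [per_lt hn, if_pos (by omega)]
  · rw [per_ge (by omega : a ≤ n + 1)]
    by_cases hn' : n < a
    · have hna : n + 1 = a := by omega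
      rw [if_pos hn', hna]
      simp
    · rw [if_neg hn']
      set m := n - a with hm
      have hmod : n + 1 - a = m + 1 := by omega
      rw [hmod]
      have hr : m % p < p := Nat.mod_lt _ hp0
      have hadd : (m + 1) % p = (m % p + 1 % p) % p := Nat.add_mod m 1 p
      by_cases hcase : m % p + 1 = p
      · have h1 : (m + 1) % p = 0 := by
          rcases Nat.lt_or_ge 1 p with hp1 | hp1
          · rw [hadd, Nat.mod_eq_of_lt hp1, hcase, Nat.mod_self]
          · have hpp : p = 1 := by omega
            simp [hpp]
            omega
        rw [h1, show a + m % p + 1 = b from by omega, ← hcyc]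
        simp
      · have hlt : m % p + 1 < p := by omega
        have h1 : (m + 1) % p = m % p + 1 := by
          rw [hadd, Nat.mod_eq_of_lt (by omega : 1 < p), Nat.mod_eq_of_lt hlt]
        rw [h1, ← Nat.add_assoc]

lemma per_isPlay {A : Arena V} {v : V} {ρ : ℕ → V} {a b : ℕ}
    (hab : a < b) (hcyc : ρ a = ρ b) (hp : IsPlay A v ρ) :
    IsPlay A v (per ρ a b) := by
  constructor
  · by_cases h0 : 0 < a
    · rw [per_lt h0]; exact hp.1
    · have ha : a = 0 := by omega
      rw [per_ge (by omega)]
      simp [ha, hp.1]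
  · intro n
    rw [per_succ hab hcyc n]
    by_cases hn : n < a
    · rw [per_lt hn, if_pos hn]; exact hp.2 n
    · rw [per_ge (by omega : a ≤ n), if_neg hn]; exact hp.2 _

lemma per_consistent {A : Arena V} {σ : V → V} {ρ : ℕ → V} {a b : ℕ}
    (hab : a < b) (hcyc : ρ a = ρ b) (hc : Consistent0 A σ ρ) :
    Consistent0 A σ (per ρ a b) := by
  intro n hP
  rw [per_succ hab hcyc n]
  by_cases hn : n < a
  · rw [per_lt hn] at hP ⊢; rw [if_pos hn]; exact hc n hP
  · rw [per_ge (by omega : a ≤ n)] at hP ⊢; rw [if_neg hn]; exact hc _ hP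

lemma per_w {A : Arena V} {ρ : ℕ → V} {a b : ℕ}
    (hab : a < b) (hcyc : ρ a = ρ b) (n : ℕ) :
    A.w (per ρ a b n) (per ρ a b (n + 1)) =
      A.w (ρ (if n < a then n else a + (n - a) % (b - a)))
          (ρ ((if n < a then n else a + (n - a) % (b - a)) + 1)) := by
  rw [per_succ hab hcyc n]
  by_cases hn : n < a
  · rw [per_lt hn, if_pos hn]
  · rw [per_ge (by omega : a ≤ n), if_neg hn]

lemma per_pS {A : Arena V} {ρ : ℕ → V} {a b : ℕ}
    (hab : a < b) (hcyc : ρ a = ρ b) (m : ℕ) :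
    pS A (per ρ a b) (a + m * (b - a)) =
      pS A ρ a + (m : ℤ) * (pS A ρ b - pS A ρ a) := by
  set p := b - a with hp
  have hp0 : 0 < p := by omega
  induction m with
  | zero =>
      simp only [Nat.zero_eq, Nat.zero_mul, Nat.add_zero, Int.natCast_zero, zero_mul, add_zero]
      unfold pS
      refine Finset.sum_congr rfl ?_
      intro i hi
      rw [Finset.mem_range] at hi
      rw [per_w hab hcyc i, if_pos hi]
  | succ k ih =>
      have hsplit : a + (k + 1) * p = (a + k * p) + p := by ring
      rw [hsplit, pS_add, ih]
      have hterm : ∀ i ∈ Finset.range p,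
          A.w (per ρ a b (a + k * p + i)) (per ρ a b (a + k * p + i + 1)) =
            A.w (ρ (a + i)) (ρ (a + i + 1)) := by
        intro i hi
        rw [Finset.mem_range] at hi
        rw [per_w hab hcyc (a + k * p + i), if_neg (by omega)]
        have : (a + k * p + i - a) % p = i := by
          have : a + k * p + i - a = k * p + i := by omega
          rw [this, Nat.mul_comm k p, Nat.mul_add_mod, Nat.mod_eq_of_lt hi]
        rw [this]
      rw [Finset.sum_congr rfl hterm]
      have hsum : ∑ i ∈ Finset.range p, A.w (ρ (a + i)) (ρ (a + i + 1)) =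
          pS A ρ b - pS A ρ a := by
        have := pS_add A ρ a p
        rw [show a + p = b by omega] at this
        omega
      rw [hsum]
      push_cast
      ring

-- ===== average lower bound =====

lemma avg_lb [Fintype V] (A : Arena V) (π : ℕ → V) (n : ℕ) :
    -((maxW A : ℝ)) ≤ ((pS A π n : ℤ) : ℝ) / n := by
  rcases Nat.eq_zero_or_pos n with hn | hn
  · subst hn
    simp [pS]
  · have hn' : (0:ℝ) < n := by exact_mod_cast hn
    rw [le_div_iff₀ hn']
    have h : ((-(↑n * ↑(maxW A)) : ℤ) : ℝ) ≤ ((pS A π n : ℤ) : ℝ) := by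
      exact_mod_cast pS_lb A π n
    push_cast at h ⊢
    nlinarith

-- ===== no negative cycle along consistent plays =====

lemma no_neg_cycle [Fintype V] (A : Arena V) (σ : V → V) (v : V)
    (H : ∀ ρ : ℕ → V, IsPlay A v ρ → Consistent0 A σ ρ →
      0 ≤ Filter.liminf (fun n : ℕ => ((pS A ρ n : ℤ) : ℝ) / n) Filter.atTop)
    {ρ : ℕ → V} (hp : IsPlay A v ρ) (hc : Consistent0 A σ ρ)
    {a b : ℕ} (hab : a < b) (hcyc : ρ a = ρ b) :
    pS A ρ a ≤ pS A ρ b := by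
  by_contra hneg
  push_neg at hneg
  set p := b - a with hpdef
  have hp0 : 0 < p := by omega
  have hpR : (0:ℝ) < (p:ℝ) := by exact_mod_cast hp0
  set π := per ρ a b with hπdef
  have hπp := per_isPlay hab hcyc hp
  have hπc := per_consistent hab hcyc hc
  have hL := H π hπp hπc
  set f : ℕ → ℝ := fun n => ((pS A π n : ℤ) : ℝ) / n with hfdef
  set Aa : ℝ := ((pS A ρ a : ℤ) : ℝ) with hAadef
  set C : ℝ := ((pS A ρ b : ℤ) : ℝ) - Aa with hCdef
  have hC : C < 0 := by
    have : ((pS A ρ b : ℤ) : ℝ) < ((pS A ρ a : ℤ) : ℝ) := by exact_mod_cast hneg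
    simp only [hCdef, hAadef]
    linarith
  have hval : ∀ m : ℕ, f (a + (m + 1) * p) =
      (Aa + ((m:ℝ) + 1) * C) / ((a:ℝ) + ((m:ℝ) + 1) * (p:ℝ)) := by
    intro m
    show ((pS A π (a + (m + 1) * p) : ℤ) : ℝ) / ((a + (m + 1) * p : ℕ) : ℝ) = _
    rw [hπdef, per_pS hab hcyc (m + 1)]
    push_cast
    ring_nf
    simp only [hCdef, hAadef]
    ring
  set g : ℕ → ℝ := fun m => (Aa / ((m:ℝ) + 1) + C) / ((a:ℝ) / ((m:ℝ) + 1) + (p:ℝ)) with hgdef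
  have key : ∀ m : ℕ, (Aa + ((m:ℝ) + 1) * C) / ((a:ℝ) + ((m:ℝ) + 1) * (p:ℝ)) = g m := by
    intro m
    have hm : ((m:ℝ) + 1) ≠ 0 := by positivity
    have hd1 : ((a:ℝ) + ((m:ℝ) + 1) * (p:ℝ)) ≠ 0 := by positivity
    have hd2 : ((a:ℝ) / ((m:ℝ) + 1) + (p:ℝ)) ≠ 0 := by positivity
    rw [div_eq_div_iff hd1 hd2]
    field_simp
  have h1 : Filter.Tendsto (fun m : ℕ => Aa / ((m:ℝ) + 1)) Filter.atTop (nhds 0) := by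
    have h0 := (tendsto_const_div_atTop_nhds_zero_nat Aa).comp (Filter.tendsto_add_atTop_nat 1)
    refine h0.congr fun m => ?_
    simp [Function.comp]
  have h2 : Filter.Tendsto (fun m : ℕ => (a:ℝ) / ((m:ℝ) + 1)) Filter.atTop (nhds 0) := by
    have h0 := (tendsto_const_div_atTop_nhds_zero_nat (a:ℝ)).comp (Filter.tendsto_add_atTop_nat 1)
    refine h0.congr fun m => ?_
    simp [Function.comp]
  have hG : Filter.Tendsto g Filter.atTop (nhds (C / (p:ℝ))) := by
    have hnum : Filter.Tendsto (fun m : ℕ => Aa / ((m:ℝ) + 1) + C) Filter.atTop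
        (nhds (0 + C)) := h1.add (tendsto_const_nhds (x := C))
    have hden : Filter.Tendsto (fun m : ℕ => (a:ℝ) / ((m:ℝ) + 1) + (p:ℝ)) Filter.atTop
        (nhds (0 + (p:ℝ))) := h2.add (tendsto_const_nhds (x := (p:ℝ)))
    have := hnum.div hden (by positivity : (0:ℝ) + (p:ℝ) ≠ 0)
    rw [zero_add, zero_add] at this
    exact this
  have htend : Filter.Tendsto (fun m : ℕ => f (a + (m + 1) * p)) Filter.atTop
      (nhds (C / (p:ℝ))) := by
    refine hG.congr fun m => ?_
    rw [hval m, key m]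
  set x : ℝ := C / (p:ℝ) with hxdef
  have hx : x < 0 := div_neg_of_neg_of_pos hC hpR
  have hev : ∀ᶠ m in Filter.atTop, f (a + (m + 1) * p) ≤ x / 2 :=
    htend.eventually_le_const (by linarith)
  obtain ⟨M, hM⟩ := Filter.eventually_atTop.mp hev
  have hfreq : ∃ᶠ n in Filter.atTop, f n ≤ x / 2 := by
    rw [Filter.frequently_atTop]
    intro N
    refine ⟨a + (max M N + 1) * p, ?_, hM (max M N) (le_max_left _ _)⟩
    have h3 : max M N + 1 ≤ (max M N + 1) * p :=
      Nat.le_mul_of_pos_right _ hp0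
    have h4 : N ≤ max M N := le_max_right _ _
    calc N ≤ max M N + 1 := by omega
      _ ≤ (max M N + 1) * p := h3
      _ ≤ a + (max M N + 1) * p := Nat.le_add_left _ _
  have hbdd : Filter.IsBoundedUnder (· ≥ ·) Filter.atTop f :=
    ⟨-((maxW A : ℝ)), Filter.eventually_map.mpr (Filter.Eventually.of_forall
      (fun n => avg_lb A π n))⟩
  have hfin : Filter.liminf f Filter.atTop ≤ x / 2 :=
    Filter.liminf_le_of_frequently_le hfreq hbdd
  linarith

-- ===== prefix sums bounded below =====

lemma prefix_lb [Fintype V] (A : Arena V) (σ : V → V) (v : V)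
    (NC : ∀ ρ : ℕ → V, IsPlay A v ρ → Consistent0 A σ ρ →
      ∀ a b : ℕ, a < b → ρ a = ρ b → pS A ρ a ≤ pS A ρ b) :
    ∀ j (ρ : ℕ → V), IsPlay A v ρ → Consistent0 A σ ρ →
      -((Fintype.card V : ℤ) * (maxW A : ℤ)) ≤ pS A ρ j := by
  intro j
  induction j using Nat.strong_induction_on with
  | _ j IH =>
    intro ρ hp hc
    set n := Fintype.card V with hn
    by_cases hj : j ≤ n
    · have h1 := pS_lb A ρ j
      have h2 : (j:ℤ) ≤ (n:ℤ) := by exact_mod_cast hj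
      have h3 : (0:ℤ) ≤ (maxW A : ℤ) := by positivity
      nlinarith
    · have hcard : Fintype.card V < Fintype.card (Fin (n + 1)) := by simp [hn]
      obtain ⟨x, y, hxy, heq⟩ :=
        Fintype.exists_ne_map_eq_of_card_lt (fun i : Fin (n + 1) => ρ i) hcard
      obtain ⟨a, b, hab, hbn, hcyc⟩ : ∃ a b : ℕ, a < b ∧ b ≤ n ∧ ρ a = ρ b := by
        rcases lt_or_gt_of_ne hxy with h | h
        · exact ⟨x.1, y.1, h, Nat.lt_succ_iff.mp y.isLt, heq⟩
        · exact ⟨y.1, x.1, h, Nat.lt_succ_iff.mp x.isLt, heq.symm⟩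
      set d := b - a with hd
      have hπp := spl_isPlay (le_of_lt hab) hcyc hp
      have hπc := spl_consistent (le_of_lt hab) hcyc hc
      have hcycle : pS A ρ a ≤ pS A ρ b := NC ρ hp hc a b hab hcyc
      have hIH := IH (j - d) (by omega) (spl ρ a b) hπp hπc
      have hsum := spl_pS (A := A) (le_of_lt hab) hcyc (j - d - a)
      rw [show a + (j - d - a) = j - d by omega, show b + (j - d - a) = j by omega] at hsum
      linarith

-- ===== forward direction: bounded prefix sums give nonnegative liminf =====

lemma forward_liminf (A : Arena V) (ρ : ℕ → V) (c : ℕ)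
    (hlb : ∀ n, -(c:ℤ) ≤ pS A ρ n) :
    0 ≤ Filter.liminf (fun n : ℕ => ((pS A ρ n : ℤ) : ℝ) / n) Filter.atTop := by
  set f : ℕ → ℝ := fun n => ((pS A ρ n : ℤ) : ℝ) / n with hfdef
  rw [Filter.liminf_eq]
  set S : Set ℝ := {a : ℝ | ∀ᶠ n in Filter.atTop, a ≤ f n} with hSdef
  by_cases hbdd : BddAbove S
  · have hmem : ∀ ε : ℝ, 0 < ε → -ε ∈ S := by
      intro ε hε
      simp only [hSdef, Set.mem_setOf_eq, Filter.eventually_atTop]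
      obtain ⟨N, hN⟩ := exists_nat_ge ((c:ℝ) / ε)
      refine ⟨N + 1, fun n hn => ?_⟩
      have hnR : (0:ℝ) < n := by
        have : (1:ℕ) ≤ n := by omega
        exact_mod_cast Nat.lt_of_lt_of_le Nat.zero_lt_one this
      have hcn : (c:ℝ) ≤ ε * n := by
        have h2 : (N:ℝ) ≤ n := by exact_mod_cast (by omega : N ≤ n)
        rw [div_le_iff₀ hε] at hN
        nlinarith
      have hpn : (-(c:ℤ) : ℝ) ≤ ((pS A ρ n : ℤ) : ℝ) := by exact_mod_cast hlb n
      show -ε ≤ ((pS A ρ n : ℤ) : ℝ) / n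
      rw [le_div_iff₀ hnR]
      push_cast at hpn
      nlinarith
    by_contra hcon
    push_neg at hcon
    have h0 := le_csSup hbdd (hmem (-(sSup S) / 2) (by linarith))
    linarith
  · rw [Real.sSup_of_not_bddAbove hbdd]

theorem stmt17' {V : Type} [Fintype V] [Nonempty V] (A : Arena V) (v : V) :
    v ∈ W0 A ↔
      ∃ σ : V → V, Strategy0 A σ ∧ ∀ ρ : ℕ → V, IsPlay A v ρ → Consistent0 A σ ρ →
        0 ≤ Filter.liminf
          (fun n : ℕ => ((∑ i ∈ Finset.range n, A.w (ρ i) (ρ (i + 1))) : ℝ) / n)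
          Filter.atTop := by
  constructor
  · rintro ⟨σ, hσ, c, hwin⟩
    refine ⟨σ, hσ, ?_⟩
    intro ρ hp hc
    have hlb : ∀ n, -(c:ℤ) ≤ pS A ρ n := by
      intro n
      have h := hwin ρ hp hc n
      unfold energy at h
      unfold pS
      linarith
    have hfun : (fun n : ℕ => ((∑ i ∈ Finset.range n, A.w (ρ i) (ρ (i + 1))) : ℝ) / n)
        = fun n : ℕ => ((pS A ρ n : ℤ) : ℝ) / n := by
      funext n
      unfold pS
      push_cast
      ring
    rw [hfun]
    exact forward_liminf A ρ c hlb
  · rintro ⟨σ, hσ, H⟩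
    refine ⟨σ, hσ, Fintype.card V * maxW A, ?_⟩
    intro ρ hp hc j
    have H' : ∀ ρ : ℕ → V, IsPlay A v ρ → Consistent0 A σ ρ →
        0 ≤ Filter.liminf (fun n : ℕ => ((pS A ρ n : ℤ) : ℝ) / n) Filter.atTop := by
      intro ρ' hp' hc'
      have hfun : (fun n : ℕ => ((pS A ρ' n : ℤ) : ℝ) / n)
          = fun n : ℕ => ((∑ i ∈ Finset.range n, A.w (ρ' i) (ρ' (i + 1))) : ℝ) / n := by
        funext n
        unfold pS
        push_cast
        ring
      rw [hfun]
      exact H ρ' hp' hc' 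
    have NC : ∀ ρ' : ℕ → V, IsPlay A v ρ' → Consistent0 A σ ρ' →
        ∀ a b : ℕ, a < b → ρ' a = ρ' b → pS A ρ' a ≤ pS A ρ' b :=
      fun ρ' hp' hc' a b hab hcyc => no_neg_cycle A σ v H' hp' hc' hab hcyc
    have hb := prefix_lb A σ v NC j ρ hp hc
    have hb' : -((Fintype.card V : ℤ) * (maxW A : ℤ)) ≤
        ∑ i ∈ Finset.range j, A.w (ρ i) (ρ (i + 1)) := hb
    unfold energy
    push_cast
    linarith


/-- `v ∈ W₀` in the energy game iff player 0 has a memoryless strategy forcing all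
consistent plays from `v` to have `liminf` average weight `≥ 0`: the energy decision
problem coincides with the threshold-0 mean-payoff condition. -/
theorem stmt17 {V : Type} [Fintype V] [Nonempty V] (A : Arena V) (v : V) :
    v ∈ W0 A ↔
      ∃ σ : V → V, Strategy0 A σ ∧ ∀ ρ : ℕ → V, IsPlay A v ρ → Consistent0 A σ ρ →
        0 ≤ Filter.liminf
          (fun n : ℕ => ((∑ i ∈ Finset.range n, A.w (ρ i) (ρ (i + 1))) : ℝ) / n)
          Filter.atTop :=
  stmt17' A v
end
end
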